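/- Let K be a kernel, let d_0, …, d_m be real numbers with m ≥ 1 and associated δ_s, and let ℓ ≥ 1 and h ≥ 1 be integers. Then for every function g : ℤ → ℝ, the reindexing identity Σ_{k=−(ℓ+mh)}^{ℓ+mh} K_diff(k/ℓ) g(k) = Σ_{s=−m}^{m} δ_{|s|} Σ_{k=−(ℓ−1)}^{ℓ−1} K(k/ℓ) g(k − hs) holds. -/
import Mathlib


/-- `δ_s = ∑_{j=|s|}^m d_j d_{j-|s|}` for `|s| ≤ m`, and `δ_s = 0` for `|s| > m`. -/
noncomputable def delta (d : ℕ → ℝ) (m : ℕ) (s : ℤ) : ℝ :=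
  if s.natAbs ≤ m then ∑ j ∈ Finset.Icc s.natAbs m, d j * d (j - s.natAbs) else 0

/-- The differencing kernel
`K_diff(t) = ∑_{s=⌈-(1+t)/λ⌉}^{⌊(1-t)/λ⌋} δ_{|s|} K(t + λ s)` with `λ = h/ℓ`. -/
noncomputable def Kdiff (K : ℝ → ℝ) (d : ℕ → ℝ) (m ℓ h : ℕ) (t : ℝ) : ℝ :=
  ∑ s ∈ Finset.Icc ⌈(-(1 + t)) / ((h : ℝ) / (ℓ : ℝ))⌉ ⌊(1 - t) / ((h : ℝ) / (ℓ : ℝ))⌋,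
    delta d m |s| * K (t + ((h : ℝ) / (ℓ : ℝ)) * (s : ℝ))

open Finset

lemma K_zero_of (K : ℝ → ℝ) (hKsupp : ∀ t : ℝ, 1 ≤ |t| → K t = 0)
    (ℓ : ℕ) (hℓ : 1 ≤ ℓ) (j : ℤ) (hj : (ℓ : ℤ) ≤ |j|) : K ((j : ℝ) / (ℓ : ℝ)) = 0 := by
  apply hKsupp
  have hℓ' : (0:ℝ) < (ℓ:ℝ) := by exact_mod_cast hℓ
  rw [abs_div, abs_of_pos hℓ', le_div_iff₀ hℓ', one_mul, ← Int.cast_abs]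
  exact_mod_cast hj

lemma delta_zero_of (d : ℕ → ℝ) (m : ℕ) (s : ℤ) (hs : (m : ℤ) < |s|) :
    delta d m |s| = 0 := by
  rw [delta, if_neg]
  rw [Int.natAbs_abs]
  rw [Int.abs_eq_natAbs] at hs
  omega

lemma inner_eq (K : ℝ → ℝ) (hKsupp : ∀ t : ℝ, 1 ≤ |t| → K t = 0)
    (m ℓ h : ℕ) (hℓ : 1 ≤ ℓ) (hh : 1 ≤ h) (d : ℕ → ℝ) (k : ℤ) :
    Kdiff K d m ℓ h ((k : ℝ) / (ℓ : ℝ))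
      = ∑ s ∈ Finset.Icc (-(m : ℤ)) (m : ℤ),
          delta d m |s| * K (((k + h * s : ℤ) : ℝ) / (ℓ : ℝ)) := by
  have hℓ' : (0:ℝ) < (ℓ:ℝ) := by exact_mod_cast hℓ
  have hh' : (0:ℝ) < (h:ℝ) := by exact_mod_cast hh
  unfold Kdiff
  have hb1 : (-(1 + (k:ℝ)/(ℓ:ℝ))) / ((h:ℝ)/(ℓ:ℝ)) = (-(ℓ:ℝ) - k) / h := by
    field_simp; ring
  have hb2 : (1 - (k:ℝ)/(ℓ:ℝ)) / ((h:ℝ)/(ℓ:ℝ)) = ((ℓ:ℝ) - k) / h := by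
    field_simp
  have harg : ∀ s : ℤ, (k:ℝ)/(ℓ:ℝ) + (h:ℝ)/(ℓ:ℝ) * (s:ℝ) = ((k + h * s : ℤ) : ℝ) / (ℓ:ℝ) := by
    intro s; push_cast; field_simp
  rw [hb1, hb2]
  set L := ⌈(-(ℓ:ℝ) - k) / (h:ℝ)⌉ with hL
  set U := ⌊((ℓ:ℝ) - k) / (h:ℝ)⌋ with hU
  have step1 : ∑ s ∈ Icc L U, delta d m |s| * K ((k:ℝ)/(ℓ:ℝ) + (h:ℝ)/(ℓ:ℝ) * (s:ℝ))
      = ∑ s ∈ Icc L U, delta d m |s| * K (((k + h * s : ℤ) : ℝ) / (ℓ:ℝ)) := by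
    exact Finset.sum_congr rfl (fun s _ => by rw [harg])
  rw [step1]
  have hsub1 : Icc L U ⊆ Icc (min L (-(m:ℤ))) (max U (m:ℤ)) :=
    Finset.Icc_subset_Icc (min_le_left _ _) (le_max_left _ _)
  have hsub2 : Icc (-(m:ℤ)) (m:ℤ) ⊆ Icc (min L (-(m:ℤ))) (max U (m:ℤ)) :=
    Finset.Icc_subset_Icc (min_le_right _ _) (le_max_right _ _)
  rw [Finset.sum_subset hsub1, Finset.sum_subset hsub2]
  · intro s _ hs
    rw [Finset.mem_Icc, not_and_or] at hs
    have : (m:ℤ) < |s| := by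
      rw [lt_abs]
      rcases hs with hs | hs <;> push_neg at hs <;> omega
    rw [delta_zero_of d m s this, zero_mul]
  · intro s _ hs
    rw [Finset.mem_Icc, not_and_or] at hs
    have hK : K (((k + h * s : ℤ) : ℝ) / (ℓ:ℝ)) = 0 := by
      apply K_zero_of K hKsupp ℓ hℓ
      rw [le_abs]
      rcases hs with hs | hs
      · push_neg at hs
        rw [hL, Int.lt_ceil, lt_div_iff₀ hh'] at hs
        have h2 : k + (h:ℤ) * s < -(ℓ:ℤ) := by
          have h3 : (k:ℝ) + (h:ℝ) * s < -(ℓ:ℝ) := by nlinarith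
          exact_mod_cast h3
        right; omega
      · push_neg at hs
        rw [hU, Int.floor_lt, div_lt_iff₀ hh'] at hs
        have h2 : (ℓ:ℤ) < k + (h:ℤ) * s := by
          have h3 : (ℓ:ℝ) < (k:ℝ) + (h:ℝ) * s := by nlinarith
          exact_mod_cast h3
        left; omega
    rw [hK, mul_zero]

theorem stmt5 (K : ℝ → ℝ) (hK0 : K 0 = 1) (hKsymm : ∀ t, K (-t) = K t)
    (hKsupp : ∀ t : ℝ, 1 ≤ |t| → K t = 0)
    (m : ℕ) (hm : 1 ≤ m) (d : ℕ → ℝ)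
    (ℓ h : ℕ) (hℓ : 1 ≤ ℓ) (hh : 1 ≤ h) :
    ∀ g : ℤ → ℝ,
      ∑ k ∈ Finset.Icc (-(ℓ + m * h : ℤ)) ((ℓ + m * h : ℕ) : ℤ),
          Kdiff K d m ℓ h ((k : ℝ) / (ℓ : ℝ)) * g k
        = ∑ s ∈ Finset.Icc (-(m : ℤ)) (m : ℤ), delta d m |s| *
            ∑ k ∈ Finset.Icc (-(ℓ : ℤ) + 1) ((ℓ : ℤ) - 1),
              K ((k : ℝ) / (ℓ : ℝ)) * g (k - (h : ℤ) * s) := by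
  intro g
  calc
    ∑ k ∈ Finset.Icc (-(ℓ + m * h : ℤ)) ((ℓ + m * h : ℕ) : ℤ),
        Kdiff K d m ℓ h ((k : ℝ) / (ℓ : ℝ)) * g k
      = ∑ k ∈ Finset.Icc (-(ℓ + m * h : ℤ)) ((ℓ + m * h : ℕ) : ℤ),
          ∑ s ∈ Finset.Icc (-(m : ℤ)) (m : ℤ),
            delta d m |s| * (K (((k + h * s : ℤ) : ℝ) / (ℓ : ℝ)) * g k) := by
        refine Finset.sum_congr rfl (fun k _ => ?_)
        rw [inner_eq K hKsupp m ℓ h hℓ hh d k, Finset.sum_mul]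
        exact Finset.sum_congr rfl (fun s _ => by ring)
    _ = ∑ s ∈ Finset.Icc (-(m : ℤ)) (m : ℤ),
          ∑ k ∈ Finset.Icc (-(ℓ + m * h : ℤ)) ((ℓ + m * h : ℕ) : ℤ),
            delta d m |s| * (K (((k + h * s : ℤ) : ℝ) / (ℓ : ℝ)) * g k) :=
        Finset.sum_comm
    _ = ∑ s ∈ Finset.Icc (-(m : ℤ)) (m : ℤ), delta d m |s| *
          ∑ k ∈ Finset.Icc (-(ℓ : ℤ) + 1) ((ℓ : ℤ) - 1),
            K ((k : ℝ) / (ℓ : ℝ)) * g (k - (h : ℤ) * s) := by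
        refine Finset.sum_congr rfl (fun s hs => ?_)
        rw [Finset.mem_Icc] at hs
        rw [Finset.mul_sum]
        have hshift :
            ∑ k ∈ Finset.Icc (-(ℓ + m * h : ℤ)) ((ℓ + m * h : ℕ) : ℤ),
              delta d m |s| * (K (((k + h * s : ℤ) : ℝ) / (ℓ : ℝ)) * g k)
            = ∑ j ∈ Finset.Icc (-(ℓ + m * h : ℤ) + h * s) (((ℓ + m * h : ℕ) : ℤ) + h * s),
              delta d m |s| * (K ((j : ℝ) / (ℓ : ℝ)) * g (j - (h : ℤ) * s)) := by
          rw [← Finset.map_add_right_Icc, Finset.sum_map]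
          refine Finset.sum_congr rfl (fun k _ => ?_)
          simp [addRightEmbedding]
        rw [hshift]
        symm
        apply Finset.sum_subset
        · apply Finset.Icc_subset_Icc <;> push_cast <;>
            nlinarith [hs.1, hs.2, (by exact_mod_cast hh : (1:ℤ) ≤ (h:ℤ))]
        · intro j _ hj
          rw [Finset.mem_Icc, not_and_or] at hj
          have hja : (ℓ:ℤ) ≤ |j| := by
            rw [le_abs]
            rcases hj with hj | hj <;> push_neg at hj <;> omega
          rw [K_zero_of K hKsupp ℓ hℓ j hja, zero_mul, mul_zero]
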